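/- arXiv:1805.03434 — 2 statements merged into one kernel-verified Lean document; each statement's English description precedes it below -/
import Mathlib

section
/- The truant of each of the following ternary sums of generalized pentagonal numbers is as given: the truant of P5(x) + P5(y) + 7·P5(z) is 25; the truant of P5(x) + P5(y) + 11·P5(z) is 43; the truant of P5(x) + 2·P5(y) + 5·P5(z) is 18; the truant of P5(x) + 2·P5(y) + 7·P5(z) is 27; and the truant of P5(x) + 3·P5(y) + 5·P5(z) is 19. That is, in each case the sum represents every positive integer smaller than the stated value, but does not represent the stated value. -/
/-- The generalized pentagonal number `P₅(x) = (3x² - x)/2`. -/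
def P5 (x : ℤ) : ℤ := (3 * x ^ 2 - x) / 2

/-- The ternary sum `a·P₅(x) + b·P₅(y) + c·P₅(z)` represents `N`. -/
def Represents3 (a b c N : ℤ) : Prop :=
  ∃ x y z : ℤ, a * P5 x + b * P5 y + c * P5 z = N

/-- The ternary sum `a·P₅(x) + b·P₅(y) + c·P₅(z)` has truant `t`: it represents
every positive integer smaller than `t` but does not represent `t`. -/
def Truant3 (a b c t : ℤ) : Prop :=
  (∀ m : ℤ, 0 < m → m < t → Represents3 a b c m) ∧ ¬ Represents3 a b c t

lemma two_mul_P5 (x : ℤ) : 2 * P5 x = 3 * x ^ 2 - x := by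
  have h2 : (2 : ℤ) ∣ 3 * x ^ 2 - x := by
    rcases Int.even_or_odd x with ⟨k, rfl⟩ | ⟨k, rfl⟩
    · exact ⟨6 * k ^ 2 - k, by ring⟩
    · exact ⟨6 * k ^ 2 + 5 * k + 1, by ring⟩
  exact Int.mul_ediv_cancel' h2

lemma P5_nonneg (x : ℤ) : 0 ≤ P5 x := by
  have h := two_mul_P5 x
  rcases le_or_gt x 0 with hx | hx <;> nlinarith

set_option maxHeartbeats 2000000 in
/-- The truants of the five non-universal ternary candidates:
`Φ_{1,1,7}` has truant 25, `Φ_{1,1,11}` has truant 43, `Φ_{1,2,5}` has truant 18,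
`Φ_{1,2,7}` has truant 27 and `Φ_{1,3,5}` has truant 19. -/
theorem ternary_truants :
    Truant3 1 1 7 25 ∧ Truant3 1 1 11 43 ∧ Truant3 1 2 5 18 ∧
    Truant3 1 2 7 27 ∧ Truant3 1 3 5 19 := by
  refine ⟨?_, ?_, ?_, ?_, ?_⟩
  · constructor
    · intro m hm1 hm2
      interval_cases m
      · exact ⟨1, 0, 0, by decide⟩
      · exact ⟨0, -1, 0, by decide⟩
      · exact ⟨1, -1, 0, by decide⟩
      · exact ⟨-1, -1, 0, by decide⟩
      · exact ⟨2, 0, 0, by decide⟩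
      · exact ⟨2, 1, 0, by decide⟩
      · exact ⟨0, -2, 0, by decide⟩
      · exact ⟨1, -2, 0, by decide⟩
      · exact ⟨-1, -2, 0, by decide⟩
      · exact ⟨2, 2, 0, by decide⟩
      · exact ⟨-1, -1, 1, by decide⟩
      · exact ⟨2, -2, 0, by decide⟩
      · exact ⟨3, 1, 0, by decide⟩
      · exact ⟨0, 0, -1, by decide⟩
      · exact ⟨1, 0, -1, by decide⟩
      · exact ⟨0, -1, -1, by decide⟩
      · exact ⟨1, -1, -1, by decide⟩
      · exact ⟨-1, -1, -1, by decide⟩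
      · exact ⟨2, 0, -1, by decide⟩
      · exact ⟨2, 1, -1, by decide⟩
      · exact ⟨0, -2, -1, by decide⟩
      · exact ⟨1, -2, -1, by decide⟩
      · exact ⟨-1, -2, -1, by decide⟩
      · exact ⟨2, 2, -1, by decide⟩
    · rintro ⟨x, y, z, h⟩
      have hx := two_mul_P5 x
      have hy := two_mul_P5 y
      have hz := two_mul_P5 z
      have hx0 := P5_nonneg x
      have hy0 := P5_nonneg y
      have hz0 := P5_nonneg z
      have bx1 : (-3 : ℤ) ≤ x := by nlinarith
      have bx2 : x ≤ (4 : ℤ) := by nlinarith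
      have by1 : (-3 : ℤ) ≤ y := by nlinarith
      have by2 : y ≤ (4 : ℤ) := by nlinarith
      have bz1 : (-1 : ℤ) ≤ z := by nlinarith
      have bz2 : z ≤ (1 : ℤ) := by nlinarith
      interval_cases x <;> interval_cases y <;> interval_cases z <;> omega
  · constructor
    · intro m hm1 hm2
      interval_cases m
      · exact ⟨1, 0, 0, by decide⟩
      · exact ⟨0, -1, 0, by decide⟩
      · exact ⟨1, -1, 0, by decide⟩
      · exact ⟨-1, -1, 0, by decide⟩
      · exact ⟨2, 0, 0, by decide⟩
      · exact ⟨2, 1, 0, by decide⟩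
      · exact ⟨0, -2, 0, by decide⟩
      · exact ⟨1, -2, 0, by decide⟩
      · exact ⟨-1, -2, 0, by decide⟩
      · exact ⟨2, 2, 0, by decide⟩
      · exact ⟨0, 0, 1, by decide⟩
      · exact ⟨2, -2, 0, by decide⟩
      · exact ⟨3, 1, 0, by decide⟩
      · exact ⟨-2, -2, 0, by decide⟩
      · exact ⟨0, -3, 0, by decide⟩
      · exact ⟨1, -3, 0, by decide⟩
      · exact ⟨-1, -3, 0, by decide⟩
      · exact ⟨0, -2, 1, by decide⟩
      · exact ⟨3, -2, 0, by decide⟩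
      · exact ⟨2, -3, 0, by decide⟩
      · exact ⟨2, 2, 1, by decide⟩
      · exact ⟨0, 0, -1, by decide⟩
      · exact ⟨1, 0, -1, by decide⟩
      · exact ⟨0, -1, -1, by decide⟩
      · exact ⟨1, -1, -1, by decide⟩
      · exact ⟨-1, -1, -1, by decide⟩
      · exact ⟨2, 0, -1, by decide⟩
      · exact ⟨2, 1, -1, by decide⟩
      · exact ⟨0, -2, -1, by decide⟩
      · exact ⟨1, -2, -1, by decide⟩
      · exact ⟨-1, -2, -1, by decide⟩
      · exact ⟨2, 2, -1, by decide⟩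
      · exact ⟨-2, -4, 0, by decide⟩
      · exact ⟨2, -2, -1, by decide⟩
      · exact ⟨3, 1, -1, by decide⟩
      · exact ⟨-2, -2, -1, by decide⟩
      · exact ⟨0, -3, -1, by decide⟩
      · exact ⟨1, -3, -1, by decide⟩
      · exact ⟨-1, -3, -1, by decide⟩
      · exact ⟨0, -5, 0, by decide⟩
      · exact ⟨3, -2, -1, by decide⟩
      · exact ⟨2, -3, -1, by decide⟩
    · rintro ⟨x, y, z, h⟩
      have hx := two_mul_P5 x
      have hy := two_mul_P5 y
      have hz := two_mul_P5 z
      have hx0 := P5_nonneg x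
      have hy0 := P5_nonneg y
      have hz0 := P5_nonneg z
      have bx1 : (-5 : ℤ) ≤ x := by nlinarith
      have bx2 : x ≤ (5 : ℤ) := by nlinarith
      have by1 : (-5 : ℤ) ≤ y := by nlinarith
      have by2 : y ≤ (5 : ℤ) := by nlinarith
      have bz1 : (-1 : ℤ) ≤ z := by nlinarith
      have bz2 : z ≤ (1 : ℤ) := by nlinarith
      interval_cases x <;> interval_cases y <;> interval_cases z <;> omega
  · constructor
    · intro m hm1 hm2
      interval_cases m
      · exact ⟨1, 0, 0, by decide⟩
      · exact ⟨-1, 0, 0, by decide⟩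
      · exact ⟨1, 1, 0, by decide⟩
      · exact ⟨0, -1, 0, by decide⟩
      · exact ⟨1, -1, 0, by decide⟩
      · exact ⟨-1, -1, 0, by decide⟩
      · exact ⟨-2, 0, 0, by decide⟩
      · exact ⟨1, 1, 1, by decide⟩
      · exact ⟨2, -1, 0, by decide⟩
      · exact ⟨0, 0, -1, by decide⟩
      · exact ⟨1, 0, -1, by decide⟩
      · exact ⟨-1, 0, -1, by decide⟩
      · exact ⟨1, 1, -1, by decide⟩
      · exact ⟨0, -1, -1, by decide⟩
      · exact ⟨1, -1, -1, by decide⟩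
      · exact ⟨-1, -1, -1, by decide⟩
      · exact ⟨-2, 0, -1, by decide⟩
    · rintro ⟨x, y, z, h⟩
      have hx := two_mul_P5 x
      have hy := two_mul_P5 y
      have hz := two_mul_P5 z
      have hx0 := P5_nonneg x
      have hy0 := P5_nonneg y
      have hz0 := P5_nonneg z
      have bx1 : (-3 : ℤ) ≤ x := by nlinarith
      have bx2 : x ≤ (3 : ℤ) := by nlinarith
      have by1 : (-2 : ℤ) ≤ y := by nlinarith
      have by2 : y ≤ (2 : ℤ) := by nlinarith
      have bz1 : (-1 : ℤ) ≤ z := by nlinarith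
      have bz2 : z ≤ (1 : ℤ) := by nlinarith
      interval_cases x <;> interval_cases y <;> interval_cases z <;> omega
  · constructor
    · intro m hm1 hm2
      interval_cases m
      · exact ⟨1, 0, 0, by decide⟩
      · exact ⟨-1, 0, 0, by decide⟩
      · exact ⟨1, 1, 0, by decide⟩
      · exact ⟨0, -1, 0, by decide⟩
      · exact ⟨1, -1, 0, by decide⟩
      · exact ⟨-1, -1, 0, by decide⟩
      · exact ⟨-2, 0, 0, by decide⟩
      · exact ⟨1, 0, 1, by decide⟩
      · exact ⟨2, -1, 0, by decide⟩
      · exact ⟨0, 2, 0, by decide⟩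
      · exact ⟨-2, -1, 0, by decide⟩
      · exact ⟨3, 0, 0, by decide⟩
      · exact ⟨-1, -1, 1, by decide⟩
      · exact ⟨0, 0, -1, by decide⟩
      · exact ⟨1, 0, -1, by decide⟩
      · exact ⟨-1, 0, -1, by decide⟩
      · exact ⟨1, 1, -1, by decide⟩
      · exact ⟨0, -1, -1, by decide⟩
      · exact ⟨1, -1, -1, by decide⟩
      · exact ⟨-1, -1, -1, by decide⟩
      · exact ⟨-2, 0, -1, by decide⟩
      · exact ⟨4, 0, 0, by decide⟩
      · exact ⟨2, -1, -1, by decide⟩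
      · exact ⟨0, 2, -1, by decide⟩
      · exact ⟨-2, -1, -1, by decide⟩
      · exact ⟨3, 0, -1, by decide⟩
    · rintro ⟨x, y, z, h⟩
      have hx := two_mul_P5 x
      have hy := two_mul_P5 y
      have hz := two_mul_P5 z
      have hx0 := P5_nonneg x
      have hy0 := P5_nonneg y
      have hz0 := P5_nonneg z
      have bx1 : (-4 : ℤ) ≤ x := by nlinarith
      have bx2 : x ≤ (4 : ℤ) := by nlinarith
      have by1 : (-2 : ℤ) ≤ y := by nlinarith
      have by2 : y ≤ (3 : ℤ) := by nlinarith
      have bz1 : (-1 : ℤ) ≤ z := by nlinarith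
      have bz2 : z ≤ (1 : ℤ) := by nlinarith
      interval_cases x <;> interval_cases y <;> interval_cases z <;> omega
  · constructor
    · intro m hm1 hm2
      interval_cases m
      · exact ⟨1, 0, 0, by decide⟩
      · exact ⟨-1, 0, 0, by decide⟩
      · exact ⟨0, 1, 0, by decide⟩
      · exact ⟨1, 1, 0, by decide⟩
      · exact ⟨2, 0, 0, by decide⟩
      · exact ⟨0, -1, 0, by decide⟩
      · exact ⟨1, -1, 0, by decide⟩
      · exact ⟨-1, -1, 0, by decide⟩
      · exact ⟨1, 1, 1, by decide⟩
      · exact ⟨0, 0, -1, by decide⟩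
      · exact ⟨1, 0, -1, by decide⟩
      · exact ⟨-1, 0, -1, by decide⟩
      · exact ⟨0, 1, -1, by decide⟩
      · exact ⟨1, 1, -1, by decide⟩
      · exact ⟨2, 0, -1, by decide⟩
      · exact ⟨0, -1, -1, by decide⟩
      · exact ⟨1, -1, -1, by decide⟩
      · exact ⟨-1, -1, -1, by decide⟩
    · rintro ⟨x, y, z, h⟩
      have hx := two_mul_P5 x
      have hy := two_mul_P5 y
      have hz := two_mul_P5 z
      have hx0 := P5_nonneg x
      have hy0 := P5_nonneg y
      have hz0 := P5_nonneg z
      have bx1 : (-3 : ℤ) ≤ x := by nlinarith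
      have bx2 : x ≤ (3 : ℤ) := by nlinarith
      have by1 : (-1 : ℤ) ≤ y := by nlinarith
      have by2 : y ≤ (2 : ℤ) := by nlinarith
      have bz1 : (-1 : ℤ) ≤ z := by nlinarith
      have bz2 : z ≤ (1 : ℤ) := by nlinarith
      interval_cases x <;> interval_cases y <;> interval_cases z <;> omega
end

section
/- Every positive integer congruent to 1 modulo 4 that is represented over ℤ by the ternary quadratic form g(x,y,z) = x² + 2y² + 2yz + 4z² is also represented over ℤ by the ternary quadratic form f(x,y,z) = x² + y² + 7z². -/
/-- Every positive integer congruent to `1` modulo `4` that is represented by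
`x² + 2y² + 2yz + 4z²` is also represented by `x² + y² + 7z²`. -/
theorem subform_1_1_7 (n : ℤ) (hn : 0 < n) (hmod : n % 4 = 1)
    (h : ∃ x y z : ℤ, x ^ 2 + 2 * y ^ 2 + 2 * y * z + 4 * z ^ 2 = n) :
    ∃ x y z : ℤ, x ^ 2 + y ^ 2 + 7 * z ^ 2 = n := by
  obtain ⟨x, y, z, hxyz⟩ := h
  rcases Int.even_or_odd y with ⟨k, hk⟩ | ⟨k, hk⟩
  · -- y = 2k
    exact ⟨x, k + 2 * z, k, by subst hk; linear_combination hxyz⟩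
  · -- y = 2k + 1, odd
    rcases Int.even_or_odd z with ⟨b, hb⟩ | ⟨b, hb⟩
    · -- z even: contradiction with n % 4 = 1
      exfalso
      rcases Int.even_or_odd x with ⟨c, hc⟩ | ⟨c, hc⟩
      · have : n = 4 * (c ^ 2 + 2 * k ^ 2 + 2 * k + 2 * k * b + b + 4 * b ^ 2) + 2 := by
          subst hk hb hc; linear_combination -hxyz
        omega
      · have : n = 4 * (c ^ 2 + c + 2 * k ^ 2 + 2 * k + 2 * k * b + b + 4 * b ^ 2) + 3 := by
          subst hk hb hc; linear_combination -hxyz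
        omega
    · -- z = 2b + 1, odd
      exact ⟨x, k - 3 * b - 1, k + b + 1, by subst hk hb; linear_combination hxyz⟩
end
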